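/- arXiv:2107.09339 — 2 statements merged into one kernel-verified Lean document; each statement's English description precedes it below -/
import Mathlib

section
/- Let λ be a singular cardinal such that cf(λ) is not a Jonsson cardinal, and suppose UB_λ fails. Then there is no sequence ⟨U_i : i < λ⁺⟩ of cofinal subsets U_i ∈ [λ]^{cf(λ)} of λ together with, for each i < λ⁺, an injective sequence ⟨(α_{i,j}, β_{i,j}) : j < i⟩ of pairs with α_{i,j} ∈ U_i, β_{i,j} ∈ U_j. (Contrapositive: from such sequences one can construct a function f : [λ⁺]^{<ω} → λ⁺ witnessing UB_λ.) -/
open Cardinal Set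

/-- `x` is closed under `f : [λ⁺]^{<ω} → λ⁺`. -/
def ClosedUnder (f : Finset Ordinal → Ordinal) (x : Set Ordinal) : Prop :=
  ∀ s : Finset Ordinal, (↑s : Set Ordinal) ⊆ x → f s ∈ x

/-- Usuba's principle `UB_λ`. -/
def UB (lam : Cardinal.{0}) : Prop :=
  ∃ f : Finset Ordinal → Ordinal,
    (∀ s : Finset Ordinal, (↑s : Set Ordinal) ⊆ Set.Iio (Order.succ lam).ord →
      f s < (Order.succ lam).ord) ∧
    ∀ x y : Set Ordinal, x ⊆ Set.Iio (Order.succ lam).ord →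
      y ⊆ Set.Iio (Order.succ lam).ord → ClosedUnder f x → ClosedUnder f y →
      x ∩ Set.Iio lam.ord = y ∩ Set.Iio lam.ord →
      sSup (x ∩ Set.Iio lam.ord) = lam.ord →
      x ⊆ y ∨ y ⊆ x

/-- `κ` is a Jonsson cardinal. -/
def IsJonsson (κ : Cardinal.{0}) : Prop :=
  ∀ f : Finset Ordinal → Ordinal,
    (∀ s : Finset Ordinal, (↑s : Set Ordinal) ⊆ Set.Iio κ.ord → f s < κ.ord) →
    ∃ H : Set Ordinal, H ⊆ Set.Iio κ.ord ∧ #H = Cardinal.lift.{1} κ ∧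
      ∀ n : ℕ, {o : Ordinal | ∃ s : Finset Ordinal,
        (↑s : Set Ordinal) ⊆ H ∧ s.card = n ∧ f s = o} ≠ Set.Iio κ.ord

/-- There is a sequence `⟨U_i : i < λ⁺⟩` of cofinal subsets `U_i ∈ [λ]^{cf(λ)}` of `λ`
together with, for each `i < λ⁺`, an injective sequence `⟨(α_{i,j}, β_{i,j}) : j < i⟩`
of pairs with `α_{i,j} ∈ U_i` and `β_{i,j} ∈ U_j`. -/
def BadSeq (lam : Cardinal.{0}) : Prop :=
  ∃ (U : Ordinal → Set Ordinal) (a b : Ordinal → Ordinal → Ordinal),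
    (∀ i < (Order.succ lam).ord,
      U i ⊆ Set.Iio lam.ord ∧ sSup (U i) = lam.ord ∧ #(U i) = Cardinal.lift.{1} lam.ord.cof) ∧
    (∀ i < (Order.succ lam).ord, ∀ j < i, a i j ∈ U i ∧ b i j ∈ U j) ∧
    (∀ i < (Order.succ lam).ord, ∀ j₁ < i, ∀ j₂ < i,
      a i j₁ = a i j₂ → b i j₁ = b i j₂ → j₁ = j₂)


open Cardinal Set

namespace UsubaAux

attribute [local instance 0] Classical.propDecidable

noncomputable def fmin (T : Finset Ordinal) : Ordinal :=
  if h : T.Nonempty then T.min' h else 0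

noncomputable def fmax (T : Finset Ordinal) : Ordinal :=
  if h : T.Nonempty then T.max' h else 0

theorem fmin_insert {a : Ordinal} {T : Finset Ordinal} (h : ∀ b ∈ T, a < b) :
    fmin (insert a T) = a := by
  rw [fmin, dif_pos (Finset.insert_nonempty a T)]
  refine le_antisymm (Finset.min'_le _ a (Finset.mem_insert_self a T)) ?_
  apply Finset.le_min'
  intro y hy
  rcases Finset.mem_insert.1 hy with rfl | hy
  · exact le_rfl
  · exact (h y hy).le

theorem fmin_singleton (a : Ordinal) : fmin {a} = a := by
  rw [fmin, dif_pos (Finset.singleton_nonempty a)]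
  exact Finset.min'_singleton a

theorem fmax_pair {a b : Ordinal} (h : a < b) : fmax {a, b} = b := by
  rw [fmax, dif_pos (Finset.insert_nonempty a {b})]
  refine le_antisymm ?_ (Finset.le_max' _ b (by simp))
  apply Finset.max'_le
  intro y hy
  rcases Finset.mem_insert.1 hy with rfl | hy
  · exact h.le
  · rw [Finset.mem_singleton.1 hy]

noncomputable def op3 (aa bb : Ordinal → Ordinal → Ordinal) (i α β : Ordinal) : Ordinal :=
  if h : ∃ j, j < i ∧ aa i j = α ∧ bb i j = β then h.choose else 0

theorem op3_eq {aa bb : Ordinal → Ordinal → Ordinal} {i α β j : Ordinal} (hj : j < i)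
    (ha : aa i j = α) (hb : bb i j = β)
    (huniq : ∀ j₁ < i, ∀ j₂ < i, aa i j₁ = aa i j₂ → bb i j₁ = bb i j₂ → j₁ = j₂) :
    op3 aa bb i α β = j := by
  have h : ∃ j', j' < i ∧ aa i j' = α ∧ bb i j' = β := ⟨j, hj, ha, hb⟩
  rw [op3, dif_pos h]
  exact huniq _ h.choose_spec.1 j hj (h.choose_spec.2.1.trans ha.symm)
    (h.choose_spec.2.2.trans hb.symm)

theorem op3_lt_or_eq (aa bb : Ordinal → Ordinal → Ordinal) (i α β : Ordinal) :
    op3 aa bb i α β < i ∨ op3 aa bb i α β = 0 := by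
  rw [op3]
  split_ifs with h
  · exact Or.inl h.choose_spec.1
  · exact Or.inr rfl

noncomputable def mkF (lo : Ordinal) (U : Ordinal → Set Ordinal)
    (aa bb : Ordinal → Ordinal → Ordinal) (g : Finset Ordinal → Ordinal)
    (E D : Ordinal → Ordinal → Ordinal) (s : Finset Ordinal) : Ordinal :=
  let L := s.filter (fun γ => lo ≤ γ)
  let T := s.filter (fun γ => γ < lo)
  let i := fmin L
  if L.card = 1 then
    if T.card = 0 then i + 1
    else if T.card = 1 then
      (if h : ∃ γ, γ ∈ U i ∧ fmin T < γ then h.choose else 0)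
    else if T.card = 2 then op3 aa bb i (fmin T) (fmin (T.erase (fmin T)))
    else if T.card = 3 then op3 aa bb i (fmin (T.erase (fmin T))) (fmin T)
    else if T.card = 4 then op3 aa bb i (fmin T) (fmin T)
    else 0
  else if L.card = 2 ∧ fmax L = i + 1 then
    (if (↑T : Set Ordinal) ⊆ U i then D i (g (T.image (E i))) else 0)
  else 0

theorem filter_decode {lo : Ordinal} (A B : Finset Ordinal)
    (hA : ∀ γ ∈ A, lo ≤ γ) (hB : ∀ γ ∈ B, γ < lo) :
    (A ∪ B).filter (fun γ => lo ≤ γ) = A ∧ (A ∪ B).filter (fun γ => γ < lo) = B := by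
  constructor
  · rw [Finset.filter_union, Finset.filter_true_of_mem hA,
      Finset.filter_false_of_mem (fun γ hγ => not_le.2 (hB γ hγ)), Finset.union_empty]
  · rw [Finset.filter_union, Finset.filter_false_of_mem (fun γ hγ => not_lt.2 (hA γ hγ)),
      Finset.filter_true_of_mem hB, Finset.empty_union]

theorem lift_cof_le_mk {lo : Ordinal.{0}} {H : Set Ordinal}
    (hsub : H ⊆ Set.Iio lo) (hunb : ∀ ξ < lo, ∃ γ ∈ H, ξ < γ) :
    Cardinal.lift.{1} lo.cof ≤ #H := by
  let ι := {p : lo.ToType // ((Ordinal.ToType.mk (o := lo)).symm p : Ordinal) ∈ H}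
  let f : ι → Ordinal := fun p => ((Ordinal.ToType.mk (o := lo)).symm p.1 : Ordinal)
  have hlsub : Ordinal.lsub f = lo := by
    apply le_antisymm
    · exact Ordinal.lsub_le fun p => ((Ordinal.ToType.mk (o := lo)).symm p.1).2
    · apply le_of_forall_lt
      intro c hc
      obtain ⟨γ, hγH, hcγ⟩ := hunb c hc
      have hγlo : γ < lo := hsub hγH
      have hmem : ((Ordinal.ToType.mk (o := lo)).symm ((Ordinal.ToType.mk (o := lo)) ⟨γ, hγlo⟩) :
          Ordinal) ∈ H := by
        rw [OrderIso.symm_apply_apply]; exact hγH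
      have hlt := Ordinal.lt_lsub f ⟨(Ordinal.ToType.mk (o := lo)) ⟨γ, hγlo⟩, hmem⟩
      have hfe : f ⟨(Ordinal.ToType.mk (o := lo)) ⟨γ, hγlo⟩, hmem⟩ = γ := by
        simp only [f, OrderIso.symm_apply_apply]
      rw [hfe] at hlt
      exact hcγ.trans hlt
  have hcof : lo.cof ≤ #ι := by
    conv_lhs => rw [← hlsub]
    exact Ordinal.cof_lsub_le f
  have he : Nonempty (↥H ≃ ι) := by
    refine ⟨{
      toFun := fun x => ⟨(Ordinal.ToType.mk (o := lo)) ⟨x.1, hsub x.2⟩, by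
        rw [OrderIso.symm_apply_apply]; exact x.2⟩
      invFun := fun p => ⟨((Ordinal.ToType.mk (o := lo)).symm p.1 : Ordinal), p.2⟩
      left_inv := ?_
      right_inv := ?_ }⟩
    · intro x; ext : 1; simp
    · intro p; ext : 1; simp
  have hmk : #H = Cardinal.lift.{1} #ι := by
    have := (Cardinal.lift_mk_eq'.{1, 0}).2 he
    rwa [Cardinal.lift_id'] at this
  rw [hmk]
  exact Cardinal.lift_le.2 hcof


variable {lo : Ordinal.{0}} {U : Ordinal.{0} → Set Ordinal.{0}}
  {aa bb : Ordinal.{0} → Ordinal.{0} → Ordinal.{0}}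
  {g : Finset Ordinal.{0} → Ordinal.{0}} {E D : Ordinal.{0} → Ordinal.{0} → Ordinal.{0}}

theorem mkF_op0 {i : Ordinal} (hi : lo ≤ i) :
    mkF lo U aa bb g E D {i} = i + 1 := by
  have hd := filter_decode (lo := lo) {i} ∅ (by simpa using hi) (by simp)
  rw [Finset.union_empty] at hd
  simp only [mkF, hd.1, hd.2, Finset.card_singleton, Finset.card_empty, fmin_singleton]
  simp [fmin_singleton]

theorem mkF_op1 {i ξ : Ordinal} (hi : lo ≤ i) (hξ : ξ < lo) :
    mkF lo U aa bb g E D {i, ξ} =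
      (if h : ∃ γ, γ ∈ U i ∧ ξ < γ then h.choose else 0) := by
  have hd := filter_decode (lo := lo) {i} {ξ} (by simpa using hi) (by simpa using hξ)
  rw [← Finset.insert_eq] at hd
  simp only [mkF, hd.1, hd.2, Finset.card_singleton, fmin_singleton]
  simp [fmin_singleton]

theorem mkF_op3a {i α β : Ordinal} (hi : lo ≤ i) (hβ : β < lo) (hαβ : α < β) :
    mkF lo U aa bb g E D {i, α, β} = op3 aa bb i α β := by
  have hd := filter_decode (lo := lo) {i} {α, β} (by simpa using hi)
    (by intro γ hγ; rcases Finset.mem_insert.1 hγ with rfl | hγ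
        · exact hαβ.trans hβ
        · rw [Finset.mem_singleton.1 hγ]; exact hβ)
  rw [← Finset.insert_eq] at hd
  have hcard : ({α, β} : Finset Ordinal).card = 2 := Finset.card_pair hαβ.ne
  have hfm : fmin {α, β} = α := fmin_insert (by intro b hb; rw [Finset.mem_singleton.1 hb]; exact hαβ)
  have her : ({α, β} : Finset Ordinal).erase α = {β} :=
    Finset.erase_insert (by simp [hαβ.ne])
  simp only [mkF, hd.1, hd.2, Finset.card_singleton, hcard, hfm, her, fmin_singleton]
  simp [fmin_singleton]

theorem mkF_op3b {i β α μ : Ordinal} (hi : lo ≤ i) (hβα : β < α) (hαμ : α < μ) (hμ : μ < lo) :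
    mkF lo U aa bb g E D {i, β, α, μ} = op3 aa bb i α β := by
  have hβμ : β < μ := hβα.trans hαμ
  have hd := filter_decode (lo := lo) {i} {β, α, μ} (by simpa using hi)
    (by intro γ hγ
        rcases Finset.mem_insert.1 hγ with rfl | hγ
        · exact hβμ.trans hμ
        rcases Finset.mem_insert.1 hγ with rfl | hγ
        · exact hαμ.trans hμ
        · rw [Finset.mem_singleton.1 hγ]; exact hμ)
  rw [← Finset.insert_eq] at hd
  have hnm : β ∉ ({α, μ} : Finset Ordinal) := by simp [hβα.ne, hβμ.ne]
  have hcard : ({β, α, μ} : Finset Ordinal).card = 3 := by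
    rw [Finset.card_insert_of_notMem hnm, Finset.card_pair hαμ.ne]
  have hfm : fmin {β, α, μ} = β := fmin_insert (by
    intro b hb
    rcases Finset.mem_insert.1 hb with rfl | hb
    · exact hβα
    · rw [Finset.mem_singleton.1 hb]; exact hβμ)
  have her : ({β, α, μ} : Finset Ordinal).erase β = {α, μ} := Finset.erase_insert hnm
  have hfm2 : fmin ({α, μ} : Finset Ordinal) = α :=
    fmin_insert (by intro b hb; rw [Finset.mem_singleton.1 hb]; exact hαμ)
  simp only [mkF, hd.1, hd.2, Finset.card_singleton, hcard, hfm, her, hfm2]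
  simp [fmin_singleton]

theorem mkF_op3c {i α μ1 μ2 μ3 : Ordinal} (hi : lo ≤ i) (h1 : α < μ1) (h2 : μ1 < μ2)
    (h3 : μ2 < μ3) (hμ : μ3 < lo) :
    mkF lo U aa bb g E D {i, α, μ1, μ2, μ3} = op3 aa bb i α α := by
  have h12 : μ1 < μ3 := h2.trans h3
  have h02 : α < μ2 := h1.trans h2
  have h03 : α < μ3 := h02.trans h3
  have hd := filter_decode (lo := lo) {i} {α, μ1, μ2, μ3} (by simpa using hi)
    (by intro γ hγ
        rcases Finset.mem_insert.1 hγ with rfl | hγ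
        · exact h03.trans hμ
        rcases Finset.mem_insert.1 hγ with rfl | hγ
        · exact h12.trans hμ
        rcases Finset.mem_insert.1 hγ with rfl | hγ
        · exact h3.trans hμ
        · rw [Finset.mem_singleton.1 hγ]; exact hμ)
  rw [← Finset.insert_eq] at hd
  have hcard : ({α, μ1, μ2, μ3} : Finset Ordinal).card = 4 := by
    rw [Finset.card_insert_of_notMem (by simp [h1.ne, h02.ne, h03.ne]),
      Finset.card_insert_of_notMem (by simp [h2.ne, h12.ne]), Finset.card_pair h3.ne]
  have hfm : fmin {α, μ1, μ2, μ3} = α := fmin_insert (by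
    intro b hb
    rcases Finset.mem_insert.1 hb with rfl | hb
    · exact h1
    rcases Finset.mem_insert.1 hb with rfl | hb
    · exact h02
    · rw [Finset.mem_singleton.1 hb]; exact h03)
  simp only [mkF, hd.1, hd.2, Finset.card_singleton, hcard, hfm]
  simp [fmin_singleton]

theorem mkF_op2 (T0 : Finset Ordinal) {i : Ordinal} (hi : lo ≤ i)
    (hT0 : ∀ γ ∈ T0, γ < lo) (hTU : ∀ γ ∈ T0, γ ∈ U i) :
    mkF lo U aa bb g E D (insert i (insert (i + 1) T0)) = D i (g (T0.image (E i))) := by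
  have hlt : i < i + 1 := by rw [Ordinal.add_one_eq_succ]; exact Order.lt_succ i
  have hd := filter_decode (lo := lo) {i, i + 1} T0
    (by intro γ hγ
        rcases Finset.mem_insert.1 hγ with rfl | hγ
        · exact hi
        · rw [Finset.mem_singleton.1 hγ]; exact hi.trans hlt.le)
    hT0
  rw [Finset.insert_union, ← Finset.insert_eq] at hd
  have hcard : ({i, i + 1} : Finset Ordinal).card = 2 := Finset.card_pair hlt.ne
  have hfm : fmin {i, i + 1} = i :=
    fmin_insert (by intro b hb; rw [Finset.mem_singleton.1 hb]; exact hlt)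
  have hfx : fmax {i, i + 1} = i + 1 := fmax_pair hlt
  have hsub : (↑T0 : Set Ordinal) ⊆ U i := by
    intro γ hγ; exact hTU γ (Finset.mem_coe.1 hγ)
  simp only [mkF, hd.1, hd.2, hcard, hfm, hfx]
  rw [if_pos (⟨trivial, trivial⟩ : True ∧ True), if_pos hsub, if_neg (by norm_num : ¬(2 = 1))]

theorem mkF_bounded {O κo : Ordinal} (hOlim : Order.IsSuccLimit O) (hloO : lo < O)
    (hU1 : ∀ i < O, U i ⊆ Set.Iio lo)
    (hg : ∀ u : Finset Ordinal, (↑u : Set Ordinal) ⊆ Set.Iio κo → g u < κo)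
    (hE : ∀ i < O, ∀ γ ∈ U i, E i γ < κo)
    (hD : ∀ i < O, ∀ δ < κo, D i δ ∈ U i)
    (s : Finset Ordinal) (hs : (↑s : Set Ordinal) ⊆ Set.Iio O) :
    mkF lo U aa bb g E D s < O := by
  have hO0 : 0 < O := hOlim.pos
  have hmem : ∀ (h : (s.filter (fun γ => lo ≤ γ)).Nonempty),
      fmin (s.filter (fun γ => lo ≤ γ)) < O := by
    intro h
    rw [fmin, dif_pos h]
    exact hs (Finset.mem_coe.2 (Finset.filter_subset _ s (Finset.min'_mem _ h)))
  simp only [mkF]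
  split_ifs with h1 h2 h3 h4 h5 h6 h7 h8 h9
  · rw [Ordinal.add_one_eq_succ]
    exact hOlim.succ_lt (hmem (Finset.card_pos.1 (by omega)))
  · exact lt_trans (Set.mem_Iio.1
      (hU1 _ (hmem (Finset.card_pos.1 (by omega))) h4.choose_spec.1)) hloO
  · exact hO0
  · rcases op3_lt_or_eq aa bb (fmin (s.filter (fun γ => lo ≤ γ))) _ _ with h | h
    · exact h.trans (hmem (Finset.card_pos.1 (by omega)))
    · rw [h]; exact hO0
  · rcases op3_lt_or_eq aa bb (fmin (s.filter (fun γ => lo ≤ γ))) _ _ with h | h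
    · exact h.trans (hmem (Finset.card_pos.1 (by omega)))
    · rw [h]; exact hO0
  · rcases op3_lt_or_eq aa bb (fmin (s.filter (fun γ => lo ≤ γ))) _ _ with h | h
    · exact h.trans (hmem (Finset.card_pos.1 (by omega)))
    · rw [h]; exact hO0
  · exact hO0
  · have hiO := hmem (Finset.card_pos.1 (by rw [h8.1]; omega))
    have hgv : g ((s.filter (fun γ => γ < lo)).image
        (E (fmin (s.filter (fun γ => lo ≤ γ))))) < κo := by
      apply hg
      intro δ hδ
      rw [Finset.coe_image] at hδ
      obtain ⟨γ, hγ, rfl⟩ := hδ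
      exact hE _ hiO γ (h9 hγ)
    exact lt_trans (Set.mem_Iio.1 (hU1 _ hiO (hD _ hiO _ hgv))) hloO
  · exact hO0
  · exact hO0

end UsubaAux

open UsubaAux in
theorem stmt4 (lam : Cardinal.{0}) (hlam : ℵ₀ ≤ lam) (hsing : lam.ord.cof < lam)
    (hJ : ¬ IsJonsson lam.ord.cof) (hUB : ¬ UB lam) :
    ¬ BadSeq lam := by
  intro hbad
  unfold BadSeq at hbad
  obtain ⟨U, a, b, hU, hab, hinj⟩ := hbad
  apply hUB
  unfold UB
  classical
  have hOlim : Order.IsSuccLimit ((Order.succ lam).ord) :=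
    Cardinal.isSuccLimit_ord (hlam.trans (Order.le_succ lam))
  have hloO : lam.ord < (Order.succ lam).ord := Cardinal.ord_lt_ord.2 (Order.lt_succ lam)
  have hlo0 : (0 : Ordinal) < lam.ord := by
    rw [← Cardinal.ord_zero]
    exact Cardinal.ord_lt_ord.2 (lt_of_lt_of_le aleph0_pos hlam)
  unfold IsJonsson at hJ
  push_neg at hJ
  obtain ⟨g, hgb, hgH⟩ := hJ
  have hEx : ∀ i, ∃ p : (Ordinal → Ordinal) × (Ordinal → Ordinal),
      i < (Order.succ lam).ord →
      (∀ γ ∈ U i, p.1 γ < lam.ord.cof.ord) ∧ (∀ δ < lam.ord.cof.ord, p.2 δ ∈ U i) ∧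
      (∀ γ ∈ U i, p.2 (p.1 γ) = γ) ∧ (∀ δ < lam.ord.cof.ord, p.1 (p.2 δ) = δ) := by
    intro i
    by_cases hi : i < (Order.succ lam).ord
    · have hcard := (hU i hi).2.2
      have hIio : #(Set.Iio lam.ord.cof.ord) = Cardinal.lift.{1} lam.ord.cof := by
        rw [Ordinal.mk_Iio_ordinal, Cardinal.card_ord]
      obtain ⟨e⟩ := Cardinal.eq.1 (hcard.trans hIio.symm)
      refine ⟨⟨fun γ => if h : γ ∈ U i then ((e ⟨γ, h⟩ : ↥(Set.Iio lam.ord.cof.ord)) : Ordinal)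
          else 0,
        fun δ => if h : δ ∈ Set.Iio lam.ord.cof.ord then ((e.symm ⟨δ, h⟩ : ↥(U i)) : Ordinal)
          else 0⟩, fun _ => ⟨?_, ?_, ?_, ?_⟩⟩
      · intro γ hγ
        dsimp only
        rw [dif_pos hγ]
        exact (e ⟨γ, hγ⟩).2
      · intro δ hδ
        dsimp only
        rw [dif_pos (Set.mem_Iio.2 hδ)]
        exact (e.symm ⟨δ, Set.mem_Iio.2 hδ⟩).2
      · intro γ hγ
        dsimp only
        rw [dif_pos hγ, dif_pos (e ⟨γ, hγ⟩).2]
        simp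
      · intro δ hδ
        dsimp only
        rw [dif_pos (Set.mem_Iio.2 hδ), dif_pos (e.symm ⟨δ, Set.mem_Iio.2 hδ⟩).2]
        simp
    · exact ⟨⟨fun _ => 0, fun _ => 0⟩, fun h => absurd h hi⟩
  choose ED hED using hEx
  refine ⟨UsubaAux.mkF lam.ord U a b g (fun i => (ED i).1) (fun i => (ED i).2), ?_, ?_⟩
  · intro s hs
    exact UsubaAux.mkF_bounded hOlim hloO (fun i hi => (hU i hi).1) hgb
      (fun i hi => (hED i hi).1) (fun i hi => (hED i hi).2.1) s hs
  intro x y hx hy hcx hcy hxy hsup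
  set f := UsubaAux.mkF lam.ord U a b g (fun i => (ED i).1) (fun i => (ED i).2) with hf
  have hzunb : ∀ ξ < lam.ord, ∃ μ ∈ x ∩ Set.Iio lam.ord, ξ < μ := by
    intro ξ hξ
    by_contra hcon
    push_neg at hcon
    have hne : (x ∩ Set.Iio lam.ord).Nonempty := by
      by_contra h
      rw [Set.not_nonempty_iff_eq_empty] at h
      rw [h, csSup_empty, Ordinal.bot_eq_zero] at hsup
      exact absurd hsup.symm (ne_of_gt hlo0)
    have hle : sSup (x ∩ Set.Iio lam.ord) ≤ ξ := csSup_le hne hcon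
    rw [hsup] at hle
    exact absurd hle (not_le.2 hξ)
  have hUunb : ∀ i < (Order.succ lam).ord, ∀ ξ < lam.ord, ∃ γ, γ ∈ U i ∧ ξ < γ := by
    intro i hi ξ hξ
    by_contra hcon
    push_neg at hcon
    have hne : (U i).Nonempty := by
      by_contra h
      rw [Set.not_nonempty_iff_eq_empty] at h
      have hsup' := (hU i hi).2.1
      rw [h, csSup_empty, Ordinal.bot_eq_zero] at hsup'
      exact absurd hsup'.symm (ne_of_gt hlo0)
    have hle : sSup (U i) ≤ ξ := csSup_le hne hcon
    rw [(hU i hi).2.1] at hle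
    exact absurd hle (not_le.2 hξ)
  have step1 : ∀ w : Set Ordinal, w ⊆ Set.Iio (Order.succ lam).ord → ClosedUnder f w →
      w ∩ Set.Iio lam.ord = x ∩ Set.Iio lam.ord → ∀ i ∈ w, lam.ord ≤ i →
      U i ⊆ x ∩ Set.Iio lam.ord := by
    intro w hw hcw hwz i hiw hloi
    have hiO : i < (Order.succ lam).ord := hw hiw
    have hi1 : i + 1 ∈ w := by
      have hcl := hcw {i} (by simpa using hiw)
      rwa [hf, UsubaAux.mkF_op0 hloi] at hcl
    have hHsub : U i ∩ w ⊆ x ∩ Set.Iio lam.ord := by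
      rw [← hwz]
      exact fun γ hγ => ⟨hγ.2, (hU i hiO).1 hγ.1⟩
    have hHunb : ∀ ξ < lam.ord, ∃ γ ∈ U i ∩ w, ξ < γ := by
      intro ξ hξ
      obtain ⟨μ, hμz, hξμ⟩ := hzunb ξ hξ
      have hμw : μ ∈ w ∩ Set.Iio lam.ord := by rw [hwz]; exact hμz
      have hex : ∃ γ, γ ∈ U i ∧ μ < γ := hUunb i hiO μ hμw.2
      have hcl := hcw {i, μ} (by
        intro γ hγ
        rcases Finset.mem_insert.1 (Finset.mem_coe.1 hγ) with rfl | hγ'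
        · exact hiw
        · rw [Finset.mem_singleton.1 hγ']; exact hμw.1)
      rw [hf, UsubaAux.mkF_op1 hloi hμw.2] at hcl
      simp only [dif_pos hex] at hcl
      exact ⟨hex.choose, ⟨hex.choose_spec.1, hcl⟩, hξμ.trans hex.choose_spec.2⟩
    have hHcard : #(U i ∩ w : Set Ordinal) = Cardinal.lift.{1} lam.ord.cof := by
      refine le_antisymm ?_ ?_
      · exact le_trans (Cardinal.mk_le_mk_of_subset Set.inter_subset_left) (hU i hiO).2.2.le
      · exact UsubaAux.lift_cof_le_mk (fun γ hγ => (hU i hiO).1 hγ.1) hHunb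
    obtain ⟨hE1, hD1, hDE, hED'⟩ := hED i hiO
    have hEinj : Set.InjOn ((ED i).1) (U i ∩ w) := by
      intro γ1 h1 γ2 h2 hEq
      have hc := congrArg ((ED i).2) hEq
      rwa [hDE γ1 h1.1, hDE γ2 h2.1] at hc
    have hH'sub : ((ED i).1 '' (U i ∩ w)) ⊆ Set.Iio lam.ord.cof.ord := by
      rintro δ ⟨γ, hγ, rfl⟩
      exact Set.mem_Iio.2 (hE1 γ hγ.1)
    have hH'card : #((ED i).1 '' (U i ∩ w) : Set Ordinal) = Cardinal.lift.{1} lam.ord.cof := by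
      rw [Cardinal.mk_image_eq_of_injOn _ _ hEinj, hHcard]
    obtain ⟨n, hn⟩ := hgH ((ED i).1 '' (U i ∩ w)) hH'sub hH'card
    intro γ hγU
    have hδ : (ED i).1 γ ∈ Set.Iio lam.ord.cof.ord := Set.mem_Iio.2 (hE1 γ hγU)
    rw [← hn] at hδ
    obtain ⟨u, huH', hucard, hgu⟩ := hδ
    have hT0H : ∀ μ ∈ u.image ((ED i).2), μ ∈ U i ∩ w := by
      intro μ hμ
      rw [Finset.mem_image] at hμ
      obtain ⟨δ, hδu, rfl⟩ := hμ
      obtain ⟨γ', hγ'H, hEγ'⟩ := huH' (Finset.mem_coe.2 hδu)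
      rw [← hEγ', hDE γ' hγ'H.1]
      exact hγ'H
    have himg : (u.image ((ED i).2)).image ((ED i).1) = u := by
      rw [Finset.image_image]
      refine Finset.ext fun δ => ?_
      rw [Finset.mem_image]
      constructor
      · rintro ⟨δ', hδ', rfl⟩
        have hlt : δ' < lam.ord.cof.ord := Set.mem_Iio.1 (hH'sub (huH' (Finset.mem_coe.2 hδ')))
        rw [Function.comp_apply, hED' δ' hlt]
        exact hδ'
      · intro hδu
        refine ⟨δ, hδu, ?_⟩
        have hlt : δ < lam.ord.cof.ord := Set.mem_Iio.1 (hH'sub (huH' (Finset.mem_coe.2 hδu)))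
        rw [Function.comp_apply, hED' δ hlt]
    have hcl := hcw (insert i (insert (i + 1) (u.image ((ED i).2)))) (by
      intro γ' hγ'
      rcases Finset.mem_insert.1 (Finset.mem_coe.1 hγ') with rfl | hγ'
      · exact hiw
      rcases Finset.mem_insert.1 hγ' with rfl | hγ'
      · exact hi1
      · exact (hT0H _ hγ').2)
    rw [hf, UsubaAux.mkF_op2 _ hloi (fun μ hμ => Set.mem_Iio.1 ((hU i hiO).1 (hT0H μ hμ).1))
      (fun μ hμ => (hT0H μ hμ).1), himg, hgu, hDE γ hγU] at hcl
    rw [← hwz]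
    exact ⟨hcl, Set.mem_Iio.2 ((hU i hiO).1 hγU)⟩
  have step2 : ∀ w w' : Set Ordinal, w ⊆ Set.Iio (Order.succ lam).ord →
      w' ⊆ Set.Iio (Order.succ lam).ord → ClosedUnder f w → ClosedUnder f w' →
      w ∩ Set.Iio lam.ord = x ∩ Set.Iio lam.ord →
      w' ∩ Set.Iio lam.ord = x ∩ Set.Iio lam.ord →
      ∀ i ∈ w, i ∉ w' → ∀ i' ∈ w', i' ∉ w → i < i' → False := by
    intro w w' hw hw' hcw hcw' hwz hw'z i hiw hiw' i' hi'w' hi'w hii'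
    have hloi : lam.ord ≤ i := by
      by_contra h
      push_neg at h
      have hz : i ∈ x ∩ Set.Iio lam.ord := by
        rw [← hwz]; exact ⟨hiw, Set.mem_Iio.2 h⟩
      rw [← hw'z] at hz
      exact hiw' hz.1
    have hloi' : lam.ord ≤ i' := by
      by_contra h
      push_neg at h
      have hz : i' ∈ x ∩ Set.Iio lam.ord := by
        rw [← hw'z]; exact ⟨hi'w', Set.mem_Iio.2 h⟩
      rw [← hwz] at hz
      exact hi'w hz.1
    have hiO : i < (Order.succ lam).ord := hw hiw
    have hi'O : i' < (Order.succ lam).ord := hw' hi'w'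
    obtain ⟨hαU, hβU⟩ := hab i' hi'O i hii'
    have hαz : a i' i ∈ x ∩ Set.Iio lam.ord := step1 w' hw' hcw' hw'z i' hi'w' hloi' hαU
    have hβz : b i' i ∈ x ∩ Set.Iio lam.ord := step1 w hw hcw hwz i hiw hloi hβU
    have hαw' : a i' i ∈ w' := by rw [← hw'z] at hαz; exact hαz.1
    have hβw' : b i' i ∈ w' := by
      have hz := hβz
      rw [← hw'z] at hz
      exact hz.1
    have hαlo : a i' i < lam.ord := Set.mem_Iio.1 hαz.2
    have hβlo : b i' i < lam.ord := Set.mem_Iio.1 hβz.2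
    rcases lt_trichotomy (a i' i) (b i' i) with hlt | heq | hgt
    · have hcl := hcw' {i', a i' i, b i' i} (by
        intro γ hγ
        rcases Finset.mem_insert.1 (Finset.mem_coe.1 hγ) with rfl | hγ
        · exact hi'w'
        rcases Finset.mem_insert.1 hγ with rfl | hγ
        · exact hαw'
        · rw [Finset.mem_singleton.1 hγ]; exact hβw')
      rw [hf, UsubaAux.mkF_op3a hloi' hβlo hlt,
        UsubaAux.op3_eq hii' rfl rfl (hinj i' hi'O)] at hcl
      exact hiw' hcl
    · obtain ⟨μ1, hμ1z, h1⟩ := hzunb (a i' i) hαlo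
      have hμ1lo : μ1 < lam.ord := Set.mem_Iio.1 hμ1z.2
      obtain ⟨μ2, hμ2z, h2⟩ := hzunb μ1 hμ1lo
      have hμ2lo : μ2 < lam.ord := Set.mem_Iio.1 hμ2z.2
      obtain ⟨μ3, hμ3z, h3⟩ := hzunb μ2 hμ2lo
      have hμ3lo : μ3 < lam.ord := Set.mem_Iio.1 hμ3z.2
      have hμ1w' : μ1 ∈ w' := by rw [← hw'z] at hμ1z; exact hμ1z.1
      have hμ2w' : μ2 ∈ w' := by rw [← hw'z] at hμ2z; exact hμ2z.1
      have hμ3w' : μ3 ∈ w' := by rw [← hw'z] at hμ3z; exact hμ3z.1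
      have hcl := hcw' {i', a i' i, μ1, μ2, μ3} (by
        intro γ hγ
        rcases Finset.mem_insert.1 (Finset.mem_coe.1 hγ) with rfl | hγ
        · exact hi'w'
        rcases Finset.mem_insert.1 hγ with rfl | hγ
        · exact hαw'
        rcases Finset.mem_insert.1 hγ with rfl | hγ
        · exact hμ1w'
        rcases Finset.mem_insert.1 hγ with rfl | hγ
        · exact hμ2w'
        · rw [Finset.mem_singleton.1 hγ]; exact hμ3w')
      rw [hf, UsubaAux.mkF_op3c hloi' h1 h2 h3 hμ3lo,
        UsubaAux.op3_eq hii' rfl heq.symm (hinj i' hi'O)] at hcl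
      exact hiw' hcl
    · obtain ⟨μ, hμz, hαμ⟩ := hzunb (a i' i) hαlo
      have hμlo : μ < lam.ord := Set.mem_Iio.1 hμz.2
      have hμw' : μ ∈ w' := by rw [← hw'z] at hμz; exact hμz.1
      have hcl := hcw' {i', b i' i, a i' i, μ} (by
        intro γ hγ
        rcases Finset.mem_insert.1 (Finset.mem_coe.1 hγ) with rfl | hγ
        · exact hi'w'
        rcases Finset.mem_insert.1 hγ with rfl | hγ
        · exact hβw'
        rcases Finset.mem_insert.1 hγ with rfl | hγ
        · exact hαw'
        · rw [Finset.mem_singleton.1 hγ]; exact hμw')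
      rw [hf, UsubaAux.mkF_op3b hloi' hgt hαμ hμlo,
        UsubaAux.op3_eq hii' rfl rfl (hinj i' hi'O)] at hcl
      exact hiw' hcl
  by_contra hcon
  push_neg at hcon
  obtain ⟨hnxy, hnyx⟩ := hcon
  obtain ⟨i, hix, hiy⟩ := Set.not_subset.1 hnxy
  obtain ⟨i', hi'y, hi'x⟩ := Set.not_subset.1 hnyx
  rcases lt_trichotomy i i' with h | h | h
  · exact step2 x y hx hy hcx hcy rfl hxy.symm i hix hiy i' hi'y hi'x h
  · exact absurd (h ▸ hix) hi'x
  · exact step2 y x hy hx hcy hcx hxy.symm rfl i' hi'y hi'x i hix hiy h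
end

section
/- Suppose λ > μ are infinite cardinals, the Chang transfer principle (λ⁺, λ) ↠ (μ⁺, μ) holds, and M is a structure with universe λ⁺ and vocabulary of cardinality at most cf(λ) ≤ μ. If N ≺ M is an elementary substructure with |N| = μ⁺ and |N ∩ λ| = μ, and ⟨α_i : i < μ⁺⟩ enumerates in increasing order the first μ⁺ elements of N, then there exists i* < μ⁺ such that for all i < μ⁺, cl({α_i}, M) ∩ λ ⊆ ⋃_{j < i*} cl({α_j}, M). -/
open Cardinal Set FirstOrder FirstOrder.Language FirstOrder.Language.Structure

/-- The Chang transfer principle `(λ⁺, λ) ↠ (μ⁺, μ)`. -/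
def ChangTransfer (lam mu : Cardinal.{0}) : Prop :=
  ∀ (L : FirstOrder.Language.{0, 0}), L.card ≤ ℵ₀ →
    ∀ (u : L.Relations 1) (M : Type 1) [L.Structure M],
      #M = Cardinal.lift.{1} (Order.succ lam) →
      #{x : M | RelMap u ![x]} = Cardinal.lift.{1} lam →
      ∃ N : L.ElementarySubstructure M,
        #N = Cardinal.lift.{1} (Order.succ mu) ∧
        #{x : M | x ∈ N ∧ RelMap u ![x]} = Cardinal.lift.{1} mu

theorem stmt12 (lam mu : Cardinal.{0}) (hmu : ℵ₀ ≤ mu) (hlt : mu < lam)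
    (hch : ChangTransfer lam mu)
    (L : FirstOrder.Language.{0, 0}) (hL : L.card ≤ lam.ord.cof)
    (hcf : lam.ord.cof ≤ mu)
    (inst : L.Structure {o : Ordinal // o < (Order.succ lam).ord})
    -- `N ≺ M` with `|N| = μ⁺` and `|N ∩ λ| = μ`
    (N : L.ElementarySubstructure {o : Ordinal // o < (Order.succ lam).ord})
    (hN₁ : #N = Cardinal.lift.{1} (Order.succ mu))
    (hN₂ : #{x : {o : Ordinal // o < (Order.succ lam).ord} | x ∈ N ∧ x.val < lam.ord}
      = Cardinal.lift.{1} mu)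
    -- `⟨α_i : i < μ⁺⟩` enumerates in increasing order the first `μ⁺` elements of `N`
    (α : Ordinal → {o : Ordinal // o < (Order.succ lam).ord})
    (hmem : ∀ i < (Order.succ mu).ord, α i ∈ N)
    (hmono : ∀ i j : Ordinal, i < j → j < (Order.succ mu).ord → (α i).val < (α j).val)
    (hinit : ∀ x ∈ N, ∀ i < (Order.succ mu).ord, x.val < (α i).val → ∃ j < i, x = α j) :
    ∃ istar < (Order.succ mu).ord, ∀ i < (Order.succ mu).ord,
      ∀ x ∈ Substructure.closure L {α i}, x.val < lam.ord →
        ∃ j < istar, x ∈ Substructure.closure L {α j} := by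
  set o : Ordinal := (Order.succ mu).ord with ho
  set S : Set {o : Ordinal // o < (Order.succ lam).ord} := {x : {o : Ordinal // o < (Order.succ lam).ord} | x ∈ N ∧ x.val < lam.ord} with hS
  have hmusucc : ℵ₀ ≤ Order.succ mu := hmu.trans (le_of_lt (Order.lt_succ mu))
  have holim : Order.IsSuccLimit o := Cardinal.isSuccLimit_ord hmusucc
  have hcof : o.cof = Order.succ mu := (Cardinal.isRegular_succ hmu).cof_eq
  -- Every element of S equals some `α j`, `j < o`.
  have key : ∀ x : {o : Ordinal // o < (Order.succ lam).ord}, x ∈ S → ∃ j < o, x = α j := by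
    intro x hx
    have hex : ∃ i < o, x.val < (α i).val := by
      by_contra h
      push_neg at h
      have hle : #(Iio o) ≤ #S := by
        refine Cardinal.mk_le_of_injective (f := fun i : Iio o =>
          (⟨α i.1, hmem i.1 i.2, lt_of_le_of_lt (h i.1 i.2) hx.2⟩ : S)) ?_
        intro i j hij
        simp only [Subtype.mk.injEq] at hij
        rcases lt_trichotomy i.1 j.1 with h' | h' | h'
        · exact absurd (hmono i.1 j.1 h' j.2) (by rw [hij]; exact lt_irrefl _)
        · exact Subtype.ext h'
        · exact absurd (hmono j.1 i.1 h' i.2) (by rw [hij]; exact lt_irrefl _)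
      rw [Ordinal.mk_Iio_ordinal, hN₂, ho, Cardinal.card_ord, Cardinal.lift_le] at hle
      exact absurd hle (not_le.2 (Order.lt_succ mu))
    obtain ⟨i, hi, hxi⟩ := hex
    obtain ⟨j, hj, hxj⟩ := hinit x hx.1 i hi hxi
    exact ⟨j, hj.trans hi, hxj⟩
  -- choose indices
  have hSmu : Cardinal.lift.{1, 0} #(mu.out) = Cardinal.lift.{0, 1} #S := by
    rw [hS, hN₂, Cardinal.mk_out, Cardinal.lift_id']
  obtain ⟨e⟩ := Cardinal.lift_mk_eq'.1 hSmu
  set g : S → Ordinal := fun x => Classical.choose (key x.1 x.2) with hg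
  have hgspec : ∀ x : S, g x < o ∧ (x : {o : Ordinal // o < (Order.succ lam).ord}) = α (g x) := fun x =>
    Classical.choose_spec (key x.1 x.2)
  set f : mu.out → Ordinal := fun k => g (e k) with hf
  have hsup : iSup f < o := by
    apply Ordinal.iSup_lt_ord
    · rw [Cardinal.mk_out, hcof]; exact Order.lt_succ mu
    · intro k; exact (hgspec (e k)).1
  refine ⟨iSup f + 1, (Ordinal.add_one_eq_succ _).symm ▸ holim.succ_lt hsup, ?_⟩
  intro i hi x hx hxlam
  have hxN : x ∈ N := by
    have hsub : Substructure.closure L {α i} ≤ N.toSubstructure :=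
      Substructure.closure_le.2 (by
        intro y hy; rw [Set.mem_singleton_iff] at hy; subst hy; exact hmem i hi)
    exact hsub hx
  have hxS : x ∈ S := ⟨hxN, hxlam⟩
  refine ⟨g ⟨x, hxS⟩, ?_, ?_⟩
  · have : g ⟨x, hxS⟩ = f (e.symm ⟨x, hxS⟩) := by
      rw [hf]; simp
    rw [this]
    exact lt_of_le_of_lt (Ordinal.le_iSup f _) (Order.lt_succ _)
  · have hxj : x = α (g ⟨x, hxS⟩) := (hgspec ⟨x, hxS⟩).2
    generalize hgx : g ⟨x, hxS⟩ = j at hxj ⊢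
    rw [hxj]
    exact Substructure.subset_closure (Set.mem_singleton _)
end
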